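/- For every sufficiently large positive integer n, the Cayley graph of Z_n with connection set {±1, ±⌊n^{1/3}⌉, ±⌊n^{2/3}⌉} (where ⌊·⌉ denotes nearest integer) has diameter at most 3·n^{1/3} + 3. -/

import Mathlib

/-- Nearest integer to `n^(1/3)`. -/
noncomputable def nearCube1 (n : ℕ) : ℤ := round ((n : ℝ) ^ ((1 : ℝ) / 3))

/-- Nearest integer to `n^(2/3)`. -/
noncomputable def nearCube2 (n : ℕ) : ℤ := round ((n : ℝ) ^ ((2 : ℝ) / 3))

/-- The Cayley graph `Λ₃(n)` of `ZMod n` with connection set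
`{±1, ±⌊n^(1/3)⌉, ±⌊n^(2/3)⌉}`. -/
noncomputable def lam3 (n : ℕ) : SimpleGraph (ZMod n) :=
  SimpleGraph.fromRel (fun x y =>
    ∃ g : ℤ, (g = 1 ∨ g = nearCube1 n ∨ g = nearCube2 n) ∧ y = x + (g : ZMod n))

private lemma lam3_step (n : ℕ) (x : ZMod n) (g : ℤ)
    (hg : g = 1 ∨ g = nearCube1 n ∨ g = nearCube2 n) :
    (lam3 n).edist x (x + (g : ZMod n)) ≤ 1 := by
  by_cases h : x = x + (g : ZMod n)
  · rw [← h, SimpleGraph.edist_self]; exact zero_le_one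
  · have hadj : (lam3 n).Adj x (x + (g : ZMod n)) := by
      unfold lam3
      rw [SimpleGraph.fromRel_adj]
      exact ⟨h, Or.inl ⟨g, hg, rfl⟩⟩
    exact (SimpleGraph.edist_eq_one_iff_adj.mpr hadj).le

private lemma lam3_mul (n : ℕ) (g : ℤ)
    (hg : g = 1 ∨ g = nearCube1 n ∨ g = nearCube2 n) (k : ℕ) (x : ZMod n) :
    (lam3 n).edist x (x + (k : ZMod n) * (g : ZMod n)) ≤ (k : ℕ∞) := by
  induction k with
  | zero => simp
  | succ k ih =>
    have key : x + ((k + 1 : ℕ) : ZMod n) * (g : ZMod n)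
        = (x + (k : ZMod n) * (g : ZMod n)) + (g : ZMod n) := by
      push_cast; ring
    rw [key]
    calc (lam3 n).edist x _
        ≤ (lam3 n).edist x (x + (k : ZMod n) * (g : ZMod n))
          + (lam3 n).edist (x + (k : ZMod n) * (g : ZMod n))
            ((x + (k : ZMod n) * (g : ZMod n)) + (g : ZMod n)) :=
          SimpleGraph.edist_triangle
      _ ≤ (k : ℕ∞) + 1 := add_le_add ih (lam3_step n _ g hg)
      _ = ((k + 1 : ℕ) : ℕ∞) := by push_cast; ring

set_option maxHeartbeats 1000000 in
/-- For every sufficiently large `n`, the diameter of `Λ₃(n)` is at most `3·n^(1/3) + 3`. -/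
theorem stmt_0 : ∃ N : ℕ, ∀ n : ℕ, N ≤ n →
    ((lam3 n).diam : ℝ) ≤ 3 * (n : ℝ) ^ ((1 : ℝ) / 3) + 3 := by
  refine ⟨1000, fun n hn => ?_⟩
  haveI : NeZero n := ⟨by omega⟩
  set α : ℝ := (n : ℝ) ^ ((1 : ℝ) / 3) with hα
  -- basic facts about α
  have hn0 : (0 : ℝ) ≤ (n : ℝ) := Nat.cast_nonneg n
  have hα10 : (10 : ℝ) ≤ α := by
    have h1000 : ((1000 : ℝ)) ^ ((1 : ℝ) / 3) = 10 := by
      rw [show (1000 : ℝ) = 10 ^ (3 : ℕ) by norm_num, ← Real.rpow_natCast 10 3,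
        ← Real.rpow_mul (by norm_num)]
      norm_num
    rw [← h1000]
    apply Real.rpow_le_rpow (by norm_num) (by exact_mod_cast hn) (by norm_num)
  have hα0 : (0 : ℝ) < α := by linarith
  have hα3 : α ^ (3 : ℕ) = (n : ℝ) := by
    rw [hα, ← Real.rpow_natCast _ 3, ← Real.rpow_mul hn0]
    norm_num
  have hα2 : (n : ℝ) ^ ((2 : ℝ) / 3) = α ^ (2 : ℕ) := by
    rw [hα, ← Real.rpow_natCast _ 2, ← Real.rpow_mul hn0]
    norm_num
  -- generators as reals
  have hs_lb : α - 1/2 ≤ ((nearCube1 n : ℤ) : ℝ) := by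
    have := abs_sub_round α
    rw [abs_le] at this
    unfold nearCube1; rw [← hα]; linarith [this.2]
  have hs_ub : ((nearCube1 n : ℤ) : ℝ) ≤ α + 1/2 := by
    have := abs_sub_round α
    rw [abs_le] at this
    unfold nearCube1; rw [← hα]; linarith [this.1]
  have ht_lb : α ^ 2 - 1/2 ≤ ((nearCube2 n : ℤ) : ℝ) := by
    have := abs_sub_round ((n : ℝ) ^ ((2 : ℝ) / 3))
    rw [abs_le] at this
    unfold nearCube2; rw [← hα2]; linarith [this.2]
  have ht_ub : ((nearCube2 n : ℤ) : ℝ) ≤ α ^ 2 + 1/2 := by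
    have := abs_sub_round ((n : ℝ) ^ ((2 : ℝ) / 3))
    rw [abs_le] at this
    unfold nearCube2; rw [← hα2]; linarith [this.1]
  have hs_pos : 0 < nearCube1 n := by
    by_contra h
    push_neg at h
    have : ((nearCube1 n : ℤ) : ℝ) ≤ 0 := by exact_mod_cast h
    nlinarith
  have ht_pos : 0 < nearCube2 n := by
    by_contra h
    push_neg at h
    have : ((nearCube2 n : ℤ) : ℝ) ≤ 0 := by exact_mod_cast h
    nlinarith
  set s' : ℕ := (nearCube1 n).toNat with hs'
  set t' : ℕ := (nearCube2 n).toNat with ht'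
  have hs'r : ((s' : ℕ) : ℝ) = ((nearCube1 n : ℤ) : ℝ) := by
    rw [hs']; exact_mod_cast congrArg (Int.cast : ℤ → ℝ) (Int.toNat_of_nonneg hs_pos.le)
  have ht'r : ((t' : ℕ) : ℝ) = ((nearCube2 n : ℤ) : ℝ) := by
    rw [ht']; exact_mod_cast congrArg (Int.cast : ℤ → ℝ) (Int.toNat_of_nonneg ht_pos.le)
  have hs'0 : 0 < s' := by
    rw [hs']; omega
  have ht'0 : 0 < t' := by
    rw [ht']; omega
  -- diameter bound: every edist ≤ 3 * s'
  have hdiam : (lam3 n).diam ≤ 3 * s' := by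
    have hediam : (lam3 n).ediam ≤ ((3 * s' : ℕ) : ℕ∞) := by
      apply SimpleGraph.ediam_le_of_edist_le
      intro u v
      set m : ℕ := (v - u).val with hm
      have hmlt : m < n := ZMod.val_lt (v - u)
      have hvu : v = u + (m : ZMod n) := by
        rw [hm, ZMod.natCast_val, ZMod.cast_id]; ring
      set a : ℕ := m / t' with ha
      set r : ℕ := m % t' with hr
      set b : ℕ := r / s' with hb
      set c : ℕ := r % s' with hc
      have hdecomp : m = t' * a + (s' * b + c) := by
        rw [ha, hb, hc, hr, Nat.div_add_mod, Nat.div_add_mod]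
      -- real bounds
      have hat : (a : ℝ) * (t' : ℝ) ≤ (m : ℝ) := by
        exact_mod_cast Nat.div_mul_le_self m t'
      have hmn : (m : ℝ) < (n : ℝ) := by exact_mod_cast hmlt
      have hrt : (r : ℝ) < (t' : ℝ) := by exact_mod_cast Nat.mod_lt m ht'0
      have hbs : (b : ℝ) * (s' : ℝ) ≤ (r : ℝ) := by
        exact_mod_cast Nat.div_mul_le_self r s'
      have hcs : (c : ℝ) < (s' : ℝ) := by exact_mod_cast Nat.mod_lt r hs'0
      -- a ≤ s'
      have hA : a ≤ s' := by
        by_contra h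
        push_neg at h
        have : ((s' : ℕ) : ℝ) + 1 ≤ (a : ℝ) := by exact_mod_cast h
        rw [hs'r] at this
        rw [ht'r] at hat
        have htr0 : (0:ℝ) ≤ ((nearCube2 n : ℤ) : ℝ) := by nlinarith
        have h1 : (((nearCube1 n : ℤ) : ℝ) + 1) * ((nearCube2 n : ℤ) : ℝ)
            ≤ (a : ℝ) * ((nearCube2 n : ℤ) : ℝ) :=
          mul_le_mul_of_nonneg_right this htr0
        have h2 : (α + 1/2) * (α^2 - 1/2)
            ≤ (((nearCube1 n : ℤ) : ℝ) + 1) * ((nearCube2 n : ℤ) : ℝ) :=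
          mul_le_mul (by linarith) ht_lb (by nlinarith) (by linarith)
        nlinarith [hα3, hmn]
      -- b ≤ s' + 1
      have hB : b ≤ s' + 1 := by
        by_contra h
        push_neg at h
        have : ((s' : ℕ) : ℝ) + 2 ≤ (b : ℝ) := by exact_mod_cast h
        rw [hs'r] at this
        rw [hs'r] at hbs
        rw [ht'r] at hrt
        have hsr0 : (0:ℝ) ≤ ((nearCube1 n : ℤ) : ℝ) := by linarith
        have h1 : (((nearCube1 n : ℤ) : ℝ) + 2) * ((nearCube1 n : ℤ) : ℝ)
            ≤ (b : ℝ) * ((nearCube1 n : ℤ) : ℝ) :=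
          mul_le_mul_of_nonneg_right this hsr0
        have h2 : (α + 3/2) * (α - 1/2)
            ≤ (((nearCube1 n : ℤ) : ℝ) + 2) * ((nearCube1 n : ℤ) : ℝ) :=
          mul_le_mul (by linarith) (by linarith) (by linarith) (by linarith)
        nlinarith [ht_ub]
      -- c ≤ s' - 1
      have hC : c + 1 ≤ s' := by
        have : c < s' := Nat.mod_lt r hs'0
        omega
      have habc : a + b + c ≤ 3 * s' := by omega
      -- edist bound via walk
      have hva : v = (u + (a : ZMod n) * ((nearCube2 n : ℤ) : ZMod n))
          + (b : ZMod n) * ((nearCube1 n : ℤ) : ZMod n)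
          + (c : ZMod n) * ((1 : ℤ) : ZMod n) := by
        rw [hvu, hdecomp]
        have h1 : ((t' : ℕ) : ZMod n) = ((nearCube2 n : ℤ) : ZMod n) := by
          rw [ht']
          rw [← Int.cast_natCast (R := ZMod n), Int.toNat_of_nonneg ht_pos.le]
        have h2 : ((s' : ℕ) : ZMod n) = ((nearCube1 n : ℤ) : ZMod n) := by
          rw [hs']
          rw [← Int.cast_natCast (R := ZMod n), Int.toNat_of_nonneg hs_pos.le]
        push_cast
        rw [h1, h2]
        push_cast
        ring
      calc (lam3 n).edist u v
          ≤ (lam3 n).edist u (u + (a : ZMod n) * ((nearCube2 n : ℤ) : ZMod n))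
            + (lam3 n).edist (u + (a : ZMod n) * ((nearCube2 n : ℤ) : ZMod n))
              ((u + (a : ZMod n) * ((nearCube2 n : ℤ) : ZMod n))
                + (b : ZMod n) * ((nearCube1 n : ℤ) : ZMod n))
            + (lam3 n).edist ((u + (a : ZMod n) * ((nearCube2 n : ℤ) : ZMod n))
                + (b : ZMod n) * ((nearCube1 n : ℤ) : ZMod n))
              (((u + (a : ZMod n) * ((nearCube2 n : ℤ) : ZMod n))
                + (b : ZMod n) * ((nearCube1 n : ℤ) : ZMod n))
                + (c : ZMod n) * ((1 : ℤ) : ZMod n)) := by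
            rw [hva]
            exact le_trans SimpleGraph.edist_triangle
              (add_le_add SimpleGraph.edist_triangle le_rfl)
        _ ≤ (a : ℕ∞) + (b : ℕ∞) + (c : ℕ∞) := by
            gcongr
            · exact lam3_mul n _ (Or.inr (Or.inr rfl)) a u
            · exact lam3_mul n _ (Or.inr (Or.inl rfl)) b _
            · exact lam3_mul n _ (Or.inl rfl) c _
        _ ≤ ((3 * s' : ℕ) : ℕ∞) := by
            have : ((a + b + c : ℕ) : ℕ∞) ≤ ((3 * s' : ℕ) : ℕ∞) := by
              exact_mod_cast habc
            push_cast at this ⊢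
            convert this using 1
    calc (lam3 n).diam = (lam3 n).ediam.toNat := rfl
      _ ≤ ((3 * s' : ℕ) : ℕ∞).toNat := ENat.toNat_le_toNat hediam (ENat.coe_ne_top _)
      _ = 3 * s' := ENat.toNat_coe _
  -- finish: 3 * s' ≤ 3α + 3 in ℝ
  have : ((lam3 n).diam : ℝ) ≤ 3 * (s' : ℝ) := by
    have := hdiam
    push_cast
    exact_mod_cast Nat.cast_le.mpr hdiam
  rw [hs'r] at this
  linarith [hs_ub]
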